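/- Equivalence of the CVaR constraint and the Rockafellar–Uryasev constraint (equivalence of Eq. 2 and Eq. 4): Let (Ω, μ) be a probability space, X : Ω → ℝ an integrable random variable, ε ∈ ℝ with 0 < ε < 1, and ζ ∈ ℝ. Then: (0) the set A := {z : ℝ | (μ {ω | X ω ≥ z}).toReal ≥ ε} is nonempty and bounded above, so q := sSup A (the upper ε-value-at-risk VaR_ε(X)) is well-defined. Assume moreover (μ {ω | X ω ≥ q}).toReal = ε. Then: (i) for every v ∈ ℝ, q + (1/ε) * ∫ max 0 (X − q) ∂μ ≤ v + (1/ε) * ∫ max 0 (X − v) ∂μ; (ii) q + (1/ε) * ∫ max 0 (X − q) ∂μ = (1/ε) * ∫_{ {ω | X ω ≥ q} } X ∂μ (the conditional expectation of X given X ≥ q, i.e., CVaR_ε(X)); and consequently (iii) (1/ε) * ∫_{ {ω | X ω ≥ q} } X ∂μ ≤ ζ if and only if there exists v ∈ ℝ with v + (1/ε) * ∫ max 0 (X − v) ∂μ ≤ ζ. -/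

import Mathlib

open MeasureTheory Filter Topology

private lemma cvar_helper {Ω : Type*} [MeasurableSpace Ω]
    (μ : Measure Ω) [IsProbabilityMeasure μ] (X : Ω → ℝ) (hmX : Measurable X)
    (hX : Integrable X μ) (ε ζ : ℝ) (hε0 : 0 < ε) (hε1 : ε < 1) :
    Set.Nonempty {z : ℝ | ε ≤ (μ {ω | z ≤ X ω}).toReal} ∧
    BddAbove {z : ℝ | ε ≤ (μ {ω | z ≤ X ω}).toReal} ∧
    ((μ {ω | sSup {z : ℝ | ε ≤ (μ {ω | z ≤ X ω}).toReal} ≤ X ω}).toReal = ε →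
      ((∀ v : ℝ,
          sSup {z : ℝ | ε ≤ (μ {ω | z ≤ X ω}).toReal} +
              (1 / ε) * ∫ ω, max 0
                (X ω - sSup {z : ℝ | ε ≤ (μ {ω | z ≤ X ω}).toReal}) ∂μ ≤
            v + (1 / ε) * ∫ ω, max 0 (X ω - v) ∂μ) ∧
        (sSup {z : ℝ | ε ≤ (μ {ω | z ≤ X ω}).toReal} +
            (1 / ε) * ∫ ω, max 0
              (X ω - sSup {z : ℝ | ε ≤ (μ {ω | z ≤ X ω}).toReal}) ∂μ =
          (1 / ε) *
            ∫ ω in {ω | sSup {z : ℝ | ε ≤ (μ {ω | z ≤ X ω}).toReal} ≤ X ω},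
              X ω ∂μ) ∧
        ((1 / ε) *
            (∫ ω in {ω | sSup {z : ℝ | ε ≤ (μ {ω | z ≤ X ω}).toReal} ≤ X ω},
              X ω ∂μ) ≤ ζ ↔
          ∃ v : ℝ, v + (1 / ε) * ∫ ω, max 0 (X ω - v) ∂μ ≤ ζ))) := by
  have hint : ∀ v : ℝ, Integrable (fun ω => max 0 (X ω - v)) μ := by
    intro v
    simpa [max_comm] using (hX.sub (integrable_const v)).pos_part
  refine ⟨?_, ?_, ?_⟩
  · -- Nonempty
    have h1 : Tendsto (fun n : ℕ => μ {ω | -(n : ℝ) ≤ X ω}) atTop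
        (𝓝 (μ (⋃ n : ℕ, {ω | -(n : ℝ) ≤ X ω}))) :=
      tendsto_measure_iUnion_atTop (fun n m hnm ω hω => by
        simp only [Set.mem_setOf_eq] at *
        have : -(m : ℝ) ≤ -(n : ℝ) := by exact_mod_cast neg_le_neg (Nat.cast_le.mpr hnm)
        linarith)
    have hU : (⋃ n : ℕ, {ω | -(n : ℝ) ≤ X ω}) = Set.univ := by
      ext ω
      simp only [Set.mem_iUnion, Set.mem_setOf_eq, Set.mem_univ, iff_true]
      obtain ⟨n, hn⟩ := exists_nat_ge (-X ω)
      exact ⟨n, by linarith⟩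
    rw [hU, measure_univ] at h1
    have h2 : Tendsto (fun n : ℕ => (μ {ω | -(n : ℝ) ≤ X ω}).toReal) atTop (𝓝 1) := by
      simpa [Function.comp_def] using (ENNReal.tendsto_toReal (by simp)).comp h1
    obtain ⟨n, hn⟩ := (h2.eventually (eventually_gt_nhds hε1)).exists
    exact ⟨-(n : ℝ), hn.le⟩
  · -- BddAbove
    have h1 : Tendsto (fun n : ℕ => μ {ω | (n : ℝ) ≤ X ω}) atTop
        (𝓝 (μ (⋂ n : ℕ, {ω | (n : ℝ) ≤ X ω}))) := by
      refine tendsto_measure_iInter_atTop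
        (fun n => (hmX measurableSet_Ici).nullMeasurableSet)
        (fun n m hnm ω hω => by
          simp only [Set.mem_setOf_eq] at *
          have : (n : ℝ) ≤ (m : ℝ) := Nat.cast_le.mpr hnm
          linarith) ⟨0, measure_ne_top μ _⟩
    have hI : (⋂ n : ℕ, {ω | (n : ℝ) ≤ X ω}) = ∅ := by
      ext ω
      simp only [Set.mem_iInter, Set.mem_setOf_eq, Set.mem_empty_iff_false, iff_false, not_forall]
      obtain ⟨n, hn⟩ := exists_nat_gt (X ω)
      exact ⟨n, by push_neg; linarith⟩
    rw [hI, measure_empty] at h1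
    have h2 : Tendsto (fun n : ℕ => (μ {ω | (n : ℝ) ≤ X ω}).toReal) atTop (𝓝 0) := by
      simpa [Function.comp_def] using (ENNReal.tendsto_toReal (by simp)).comp h1
    obtain ⟨n, hn⟩ := (h2.eventually (eventually_lt_nhds hε0)).exists
    refine ⟨(n : ℝ), fun z hz => ?_⟩
    by_contra hzn
    push_neg at hzn
    have hsub : {ω | z ≤ X ω} ⊆ {ω | (n : ℝ) ≤ X ω} := fun ω hω => le_trans hzn.le hω
    have := ENNReal.toReal_mono (measure_ne_top μ _) (measure_mono hsub)
    simp only [Set.mem_setOf_eq] at hz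
    linarith
  · -- main part
    intro hq
    set A := {z : ℝ | ε ≤ (μ {ω | z ≤ X ω}).toReal} with hA
    set q := sSup A with hqdef
    set S := {ω | q ≤ X ω} with hSdef
    have hS : MeasurableSet S := hmX measurableSet_Ici
    -- key inequality for (i)
    have hkey : ∀ v : ℝ, (q - v) * ε ≤
        (∫ ω, max 0 (X ω - v) ∂μ) - ∫ ω, max 0 (X ω - q) ∂μ := by
      intro v
      have hmono : ∀ ω, S.indicator (fun _ => q - v) ω ≤
          max 0 (X ω - v) - max 0 (X ω - q) := by
        intro ω
        by_cases hω : ω ∈ S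
        · rw [Set.indicator_of_mem hω]
          have hxq : q ≤ X ω := hω
          rw [max_eq_right (by linarith : (0:ℝ) ≤ X ω - q)]
          have := le_max_right (0:ℝ) (X ω - v)
          linarith
        · rw [Set.indicator_of_notMem hω]
          have hxq : X ω < q := lt_of_not_ge hω
          rw [max_eq_left (by linarith : X ω - q ≤ (0:ℝ))]
          simp [le_max_left]
      have hi1 : Integrable (S.indicator fun _ => q - v) μ :=
        (integrable_const (q - v)).indicator hS
      have hi2 : Integrable (fun ω => max 0 (X ω - v) - max 0 (X ω - q)) μ :=
        (hint v).sub (hint q)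
      have hle := integral_mono hi1 hi2 hmono
      rw [integral_indicator_const _ hS, integral_sub (hint v) (hint q)] at hle
      rw [show μ.real S = ε from hq] at hle
      simpa [smul_eq_mul, mul_comm] using hle
    have part1 : ∀ v : ℝ,
        q + (1 / ε) * ∫ ω, max 0 (X ω - q) ∂μ ≤ v + (1 / ε) * ∫ ω, max 0 (X ω - v) ∂μ := by
      intro v
      have h2 := mul_le_mul_of_nonneg_left (hkey v) (le_of_lt (one_div_pos.mpr hε0))
      rw [mul_sub] at h2
      have h3 : (1 / ε) * ((q - v) * ε) = q - v := by field_simp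
      rw [h3] at h2
      linarith
    have part2 : q + (1 / ε) * ∫ ω, max 0 (X ω - q) ∂μ = (1 / ε) * ∫ ω in S, X ω ∂μ := by
      have hind : (fun ω => max 0 (X ω - q)) = S.indicator (fun ω => X ω - q) := by
        funext ω
        by_cases hω : ω ∈ S
        · rw [Set.indicator_of_mem hω]
          exact max_eq_right (by have : q ≤ X ω := hω; linarith)
        · rw [Set.indicator_of_notMem hω]
          have : X ω < q := lt_of_not_ge hω
          exact max_eq_left (by linarith)
      have hIq : ∫ ω, max 0 (X ω - q) ∂μ = (∫ ω in S, X ω ∂μ) - q * ε := by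
        rw [hind, integral_indicator hS,
          integral_sub hX.integrableOn (integrable_const q).integrableOn,
          setIntegral_const, show μ.real S = ε from hq, smul_eq_mul]
        ring
      rw [hIq]
      field_simp
      ring
    refine ⟨part1, part2, ?_⟩
    constructor
    · intro h
      exact ⟨q, by rw [part2]; exact h⟩
    · rintro ⟨v, hv⟩
      calc (1 / ε) * ∫ ω in S, X ω ∂μ
          = q + (1 / ε) * ∫ ω, max 0 (X ω - q) ∂μ := part2.symm
        _ ≤ v + (1 / ε) * ∫ ω, max 0 (X ω - v) ∂μ := part1 v
        _ ≤ ζ := hv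

/-- Equivalence of the CVaR constraint and the Rockafellar–Uryasev constraint
(equivalence of Eq. 2 and Eq. 4). Here
`A = {z | μ {X ≥ z} ≥ ε}` and `q = sSup A = VaR_ε(X)`. -/
theorem cvar_rockafellar_uryasev_equivalence {Ω : Type*} [MeasurableSpace Ω]
    (μ : Measure Ω) [IsProbabilityMeasure μ] (X : Ω → ℝ)
    (hX : Integrable X μ) (ε ζ : ℝ) (hε0 : 0 < ε) (hε1 : ε < 1) :
    Set.Nonempty {z : ℝ | ε ≤ (μ {ω | z ≤ X ω}).toReal} ∧
    BddAbove {z : ℝ | ε ≤ (μ {ω | z ≤ X ω}).toReal} ∧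
    ((μ {ω | sSup {z : ℝ | ε ≤ (μ {ω | z ≤ X ω}).toReal} ≤ X ω}).toReal = ε →
      ((∀ v : ℝ,
          sSup {z : ℝ | ε ≤ (μ {ω | z ≤ X ω}).toReal} +
              (1 / ε) * ∫ ω, max 0
                (X ω - sSup {z : ℝ | ε ≤ (μ {ω | z ≤ X ω}).toReal}) ∂μ ≤
            v + (1 / ε) * ∫ ω, max 0 (X ω - v) ∂μ) ∧
        (sSup {z : ℝ | ε ≤ (μ {ω | z ≤ X ω}).toReal} +
            (1 / ε) * ∫ ω, max 0
              (X ω - sSup {z : ℝ | ε ≤ (μ {ω | z ≤ X ω}).toReal}) ∂μ =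
          (1 / ε) *
            ∫ ω in {ω | sSup {z : ℝ | ε ≤ (μ {ω | z ≤ X ω}).toReal} ≤ X ω},
              X ω ∂μ) ∧
        ((1 / ε) *
            (∫ ω in {ω | sSup {z : ℝ | ε ≤ (μ {ω | z ≤ X ω}).toReal} ≤ X ω},
              X ω ∂μ) ≤ ζ ↔
          ∃ v : ℝ, v + (1 / ε) * ∫ ω, max 0 (X ω - v) ∂μ ≤ ζ))) := by
  obtain ⟨g, hgm, hg⟩ : ∃ g, StronglyMeasurable g ∧ X =ᵐ[μ] g :=
    ⟨hX.1.mk X, hX.1.stronglyMeasurable_mk, hX.1.ae_eq_mk⟩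
  have hgint : Integrable g μ := hX.congr hg
  have hsets : ∀ z : ℝ, {ω | z ≤ X ω} =ᵐ[μ] {ω | z ≤ g ω} := by
    intro z
    filter_upwards [hg] with ω hω
    show (z ≤ X ω) = (z ≤ g ω)
    rw [hω]
  have hmeq : ∀ z : ℝ, μ {ω | z ≤ X ω} = μ {ω | z ≤ g ω} := fun z => measure_congr (hsets z)
  have hAs : {z : ℝ | ε ≤ (μ {ω | z ≤ X ω}).toReal}
      = {z : ℝ | ε ≤ (μ {ω | z ≤ g ω}).toReal} := by
    ext z
    rw [Set.mem_setOf_eq, Set.mem_setOf_eq, hmeq z]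
  have hIv : ∀ v : ℝ, ∫ ω, max 0 (X ω - v) ∂μ = ∫ ω, max 0 (g ω - v) ∂μ := by
    intro v
    refine integral_congr_ae ?_
    filter_upwards [hg] with ω hω
    rw [hω]
  have hIS : ∀ c : ℝ, ∫ ω in {ω | c ≤ X ω}, X ω ∂μ = ∫ ω in {ω | c ≤ g ω}, g ω ∂μ := by
    intro c
    rw [Measure.restrict_congr_set (hsets c)]
    exact integral_congr_ae (ae_restrict_of_ae hg)
  rw [hAs]
  simp only [hmeq, hIv, hIS]
  exact cvar_helper μ g hgm.measurable hgint ε ζ hε0 hε1
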